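/- arXiv:math/0511094 — 2 statements merged into one kernel-verified Lean document; each statement's English description precedes it below -/
import Mathlib

section
/- Let F : ℝⁿ → [0,1] be a function that is increasing in each variable separately and satisfies: (a) if xᵢ⁽ᵏ⁾ ↓ xᵢ for each i then F(x₁⁽ᵏ⁾,…,xₙ⁽ᵏ⁾) ↓ F(x₁,…,xₙ); (b) F(x₁,…,xₙ) → 0 whenever some xᵢ → −∞; (c) F(x₁,…,xₙ) → 1 as all xᵢ → +∞; and suppose F arises as F(x₁,…,xₙ) = ν((−∞,x₁],…,(−∞,xₙ]) for a map ν on products of Borel sets that is a measure in each coordinate separately. Then there exists a unique Borel probability measure μ on ℝⁿ with μ((−∞,x₁] × ⋯ × (−∞,xₙ]) = F(x₁,…,xₙ) for all x₁,…,xₙ ∈ ℝ. -/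
open MeasureTheory Filter Set ProbabilityTheory
open scoped ENNReal

namespace Statement7Aux


/-- `ν` is a measure in each coordinate separately. -/
def SepM {n : ℕ} (ν : (Fin n → Set ℝ) → ENNReal) : Prop :=
  ∀ (i : Fin n) (B : Fin n → Set ℝ), (∀ j, MeasurableSet (B j)) →
    ∃ m : Measure ℝ, ∀ C : Set ℝ, MeasurableSet C → m C = ν (Function.update B i C)

lemma sepm_mono {n : ℕ} {ν : (Fin n → Set ℝ) → ENNReal} (hsep : SepM ν)
    {B C : Fin n → Set ℝ} (hB : ∀ i, MeasurableSet (B i)) (hC : ∀ i, MeasurableSet (C i))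
    (hBC : ∀ i, B i ⊆ C i) : ν B ≤ ν C := by
  classical
  let blend : ℕ → Fin n → Set ℝ := fun k i => if (i : ℕ) < k then B i else C i
  have hblend_meas : ∀ k j, MeasurableSet (blend k j) := by
    intro k j
    by_cases h : (j : ℕ) < k <;> simp only [blend, h, if_true, if_false] <;>
      [exact hB j; exact hC j]
  have key : ∀ k, ν (blend k) ≤ ν C := by
    intro k
    induction k with
    | zero =>
      have : blend 0 = C := by funext i; simp [blend]
      rw [this]
    | succ k ih =>
      by_cases hk : k < n
      · set i : Fin n := ⟨k, hk⟩ with hi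
        obtain ⟨m, hm⟩ := hsep i (blend (k + 1)) (hblend_meas (k + 1))
        have h1 : Function.update (blend (k + 1)) i (B i) = blend (k + 1) := by
          apply Function.update_eq_self_iff.mpr
          simp [blend, hi]
        have h2 : Function.update (blend (k + 1)) i (C i) = blend k := by
          funext j
          rcases eq_or_ne j i with rfl | hj
          · simp [blend, hi]
          · have hji : (j : ℕ) ≠ k := by
              intro h; apply hj; apply Fin.ext; simp [hi, h]
            have : (j : ℕ) < k + 1 ↔ (j : ℕ) < k := by omega
            simp only [blend, Function.update_of_ne hj, this]
        calc ν (blend (k + 1)) = m (B i) := by rw [hm (B i) (hB i), h1]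
          _ ≤ m (C i) := measure_mono (hBC i)
          _ = ν (blend k) := by rw [hm (C i) (hC i), h2]
          _ ≤ ν C := ih
      · have : blend (k + 1) = blend k := by
          funext j
          have hj : (j : ℕ) < k := lt_of_lt_of_le j.isLt (by omega)
          simp [blend, hj, Nat.lt_succ_of_lt hj]
        rw [this]; exact ih
  have : blend n = B := by
    funext i; simp [blend, i.isLt]
  calc ν B = ν (blend n) := by rw [this]
    _ ≤ ν C := key n

/-- Finite measures on a finite product agreeing on all measurable boxes are equal. -/
lemma measure_ext_boxes {n : ℕ} {μ1 μ2 : Measure (Fin n → ℝ)} [IsFiniteMeasure μ1]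
    [IsFiniteMeasure μ2]
    (h : ∀ B : Fin n → Set ℝ, (∀ i, MeasurableSet (B i)) → μ1 (univ.pi B) = μ2 (univ.pi B)) :
    μ1 = μ2 := by
  refine ext_of_generate_finite _ generateFrom_pi.symm isPiSystem_pi ?_ ?_
  · rintro s ⟨B, hB, rfl⟩
    exact h B fun i => hB i (mem_univ i)
  · have := h (fun _ => univ) (fun _ => MeasurableSet.univ)
    simpa [Set.pi_univ] using this

/-- A decreasing sequence of rationals strictly above `t` converging to `t`. -/
lemma exists_rat_seq_antitone (t : ℝ) :
    ∃ q : ℕ → ℚ, (∀ k, t < (q k : ℝ)) ∧ (∀ k l, k ≤ l → q l ≤ q k) ∧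
      Tendsto (fun k => (q k : ℝ)) atTop (nhds t) := by
  have hpick : ∀ k : ℕ, ∃ qq : ℚ, t < (qq : ℝ) ∧ (qq : ℝ) < t + 1 / (k + 1) := by
    intro k
    have : (0:ℝ) < 1 / (k + 1) := by positivity
    exact exists_rat_btwn (lt_add_of_pos_right t this)
  choose pick hpick1 hpick2 using hpick
  let q : ℕ → ℚ := fun k => Nat.rec (motive := fun _ => ℚ) (pick 0) (fun k ih => min ih (pick (k + 1))) k
  have hq_succ : ∀ k : ℕ, q (k + 1) = (min (q k) (pick (k + 1)) : ℚ) := fun k => rfl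
  have hq_gt : ∀ k, t < (Rat.cast (q k) : ℝ) := by
    intro k
    induction k with
    | zero => exact hpick1 0
    | succ k ih =>
      rw [hq_succ, Rat.cast_min]
      exact lt_min ih (hpick1 (k + 1))
  have hq_le_pick : ∀ k, q k ≤ pick k := by
    intro k
    cases k with
    | zero => exact le_refl _
    | succ k => rw [hq_succ]; exact min_le_right _ _
  have hq_anti : ∀ k l, k ≤ l → q l ≤ q k := by
    intro k l hkl
    induction l with
    | zero => simp_all
    | succ l ih =>
      rcases Nat.lt_or_ge k (l + 1) with h | h
      · have := ih (by omega)
        rw [hq_succ]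
        exact (min_le_left _ _).trans this
      · have : k = l + 1 := by omega
        subst this; exact le_refl _
  refine ⟨q, hq_gt, hq_anti, ?_⟩
  have hub : ∀ k, (Rat.cast (q k) : ℝ) ≤ t + 1 / (k + 1) := fun k =>
    le_trans (by exact_mod_cast (Rat.cast_le (K := ℝ)).mpr (hq_le_pick k)) (hpick2 k).le
  have h1 : Tendsto (fun k : ℕ => t + 1 / ((k : ℝ) + 1)) atTop (nhds (t + 0)) :=
    tendsto_const_nhds.add tendsto_one_div_add_atTop_nhds_zero_nat
  rw [add_zero] at h1
  exact tendsto_of_tendsto_of_tendsto_of_le_of_le tendsto_const_nhds h1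
    (fun k => (hq_gt k).le) hub

lemma snoc_measurable {n : ℕ} {B : Fin n → Set ℝ} {C : Set ℝ}
    (hB : ∀ i, MeasurableSet (B i)) (hC : MeasurableSet C) :
    ∀ j, MeasurableSet (Fin.snoc (α := fun _ => Set ℝ) B C j) := by
  intro j
  refine Fin.lastCases ?_ ?_ j
  · simpa using hC
  · intro i; simpa using hB i


lemma step (n : ℕ)
    (IH : ∀ ν : (Fin n → Set ℝ) → ENNReal, ν (fun _ => univ) ≠ ⊤ → SepM ν →
      ∃ μ : Measure (Fin n → ℝ), IsFiniteMeasure μ ∧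
        ∀ B : Fin n → Set ℝ, (∀ i, MeasurableSet (B i)) → μ (univ.pi B) = ν B)
    (ν : (Fin (n+1) → Set ℝ) → ENNReal) (hfin : ν (fun _ => univ) ≠ ⊤) (hsep : SepM ν) :
    ∃ μ : Measure (Fin (n+1) → ℝ), IsFiniteMeasure μ ∧
      ∀ B : Fin (n+1) → Set ℝ, (∀ i, MeasurableSet (B i)) → μ (univ.pi B) = ν B := by
  classical
  -- the sliced set functions are separately measures and finite
  have hEx : ∀ C : Set ℝ, MeasurableSet C → ∃ μ : Measure (Fin n → ℝ), IsFiniteMeasure μ ∧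
      ∀ B : Fin n → Set ℝ, (∀ i, MeasurableSet (B i)) → μ (univ.pi B) = ν (Fin.snoc B C) := by
    intro C hC
    refine IH (fun B => ν (Fin.snoc B C)) ?_ ?_
    · intro h
      apply hfin
      have hle := sepm_mono hsep (snoc_measurable (fun _ => MeasurableSet.univ) hC)
        (fun _ => MeasurableSet.univ) (fun i => subset_univ _)
      rw [h] at hle
      exact top_le_iff.mp hle
    · intro i B hB
      obtain ⟨m, hm⟩ := hsep i.castSucc (Fin.snoc B C) (snoc_measurable hB hC)
      refine ⟨m, fun D hD => ?_⟩
      rw [hm D hD, ← Fin.snoc_update]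
  choose! Φ hΦfin hΦbox using hEx
  haveI hΦu : IsFiniteMeasure (Φ univ) := hΦfin univ MeasurableSet.univ
  -- the measure in the last coordinate over the full box
  obtain ⟨m', hm'0⟩ := hsep (Fin.last n) (fun _ => univ) (fun _ => MeasurableSet.univ)
  have hm' : ∀ C : Set ℝ, MeasurableSet C → m' C = ν (Fin.snoc (fun _ => univ) C) := by
    intro C hC
    rw [hm'0 C hC]
    congr 1
    funext j
    refine Fin.lastCases ?_ ?_ j
    · simp
    · intro i
      rw [Function.update_of_ne (Fin.castSucc_lt_last i).ne, Fin.snoc_castSucc]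
  haveI : IsFiniteMeasure m' := by
    constructor
    rw [hm' univ MeasurableSet.univ]
    refine lt_of_le_of_lt (sepm_mono hsep (snoc_measurable (fun _ => MeasurableSet.univ)
      MeasurableSet.univ) (fun _ => MeasurableSet.univ) (fun i => subset_univ _)) ?_
    exact lt_top_iff_ne_top.mpr hfin
  -- total masses
  have hΦuniv : ∀ C : Set ℝ, MeasurableSet C → Φ C univ = m' C := by
    intro C hC
    rw [← Set.pi_univ, hΦbox C hC _ (fun _ => MeasurableSet.univ), hm' C hC]
  -- additivity of the slices
  have hadd : ∀ C D : Set ℝ, MeasurableSet C → MeasurableSet D → Disjoint C D →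
      Φ (C ∪ D) = Φ C + Φ D := by
    intro C D hC hD hCD
    haveI := hΦfin C hC; haveI := hΦfin D hD; haveI := hΦfin (C ∪ D) (hC.union hD)
    apply measure_ext_boxes
    intro B hB
    obtain ⟨mB, hmB0⟩ := hsep (Fin.last n) (Fin.snoc B univ)
      (snoc_measurable hB MeasurableSet.univ)
    have hmB : ∀ E : Set ℝ, MeasurableSet E → mB E = ν (Fin.snoc B E) := by
      intro E hE
      rw [hmB0 E hE, Fin.update_snoc_last]
    rw [hΦbox _ (hC.union hD) B hB, Measure.add_apply, hΦbox _ hC B hB, hΦbox _ hD B hB,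
      ← hmB C hC, ← hmB D hD, ← hmB _ (hC.union hD), measure_union hCD hD]
  -- each slice is dominated by the full measure
  have hle : ∀ C : Set ℝ, MeasurableSet C → Φ C ≤ Φ univ := by
    intro C hC
    have h1 : Φ univ = Φ C + Φ Cᶜ := by
      rw [← hadd C Cᶜ hC hC.compl disjoint_compl_right, union_compl_self]
    rw [h1]
    exact Measure.le_add_right le_rfl
  have hsplit : ∀ q r : ℚ, q ≤ r →
      Φ (Iic (r : ℝ)) = Φ (Iic (q : ℝ)) + Φ (Ioc (q : ℝ) (r : ℝ)) := by
    intro q r hqr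
    have h1 : Iic ((q : ℝ)) ∪ Ioc ((q : ℝ)) ((r : ℝ)) = Iic ((r : ℝ)) :=
      Iic_union_Ioc_eq_Iic (by exact_mod_cast hqr)
    rw [← h1, hadd _ _ measurableSet_Iic measurableSet_Ioc (Iic_disjoint_Ioc le_rfl)]
  -- the Radon–Nikodym derivatives
  set g : ℚ → (Fin n → ℝ) → ℝ≥0∞ := fun q => (Φ (Iic (q : ℝ))).rnDeriv (Φ univ) with hgdef
  have hg_meas : ∀ q, Measurable (g q) := fun q => Measure.measurable_rnDeriv _ _
  have hg_int : ∀ (q : ℚ) (A : Set (Fin n → ℝ)),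
      ∫⁻ y in A, g q y ∂(Φ univ) = Φ (Iic (q : ℝ)) A := by
    intro q A
    haveI := hΦfin (Iic (q : ℝ)) measurableSet_Iic
    haveI : SFinite (Φ (Iic (q : ℝ))) := inferInstance
    haveI : SigmaFinite (Φ univ) := inferInstance
    haveI : (Φ (Iic (q : ℝ))).HaveLebesgueDecomposition (Φ univ) := inferInstance
    exact Measure.setLIntegral_rnDeriv ((hle _ measurableSet_Iic).absolutelyContinuous) A
  have hg_le_one : ∀ q : ℚ, g q ≤ᵐ[Φ univ] 1 := by
    intro q
    haveI := hΦfin (Iic (q : ℝ)) measurableSet_Iic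
    exact Measure.rnDeriv_le_one_of_le (hle _ measurableSet_Iic)
  have hg_mono : ∀ q r : ℚ, q ≤ r → ∀ᵐ y ∂(Φ univ), g q y ≤ g r y := by
    intro q r hqr
    haveI := hΦfin (Iic (q : ℝ)) measurableSet_Iic
    haveI := hΦfin (Ioc (q : ℝ) (r : ℝ)) measurableSet_Ioc
    have h1 := hsplit q r hqr
    haveI : SFinite (Φ (Iic (q : ℝ))) := inferInstance
    haveI : SigmaFinite (Φ univ) := inferInstance
    haveI : (Φ (Iic (q : ℝ))).HaveLebesgueDecomposition (Φ univ) := inferInstance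
    haveI : SFinite (Φ (Ioc (q : ℝ) (r : ℝ))) := inferInstance
    haveI : (Φ (Ioc (q : ℝ) (r : ℝ))).HaveLebesgueDecomposition (Φ univ) := inferInstance
    filter_upwards [Measure.rnDeriv_add (Φ (Iic (q : ℝ))) (Φ (Ioc (q : ℝ) (r : ℝ)))
      (Φ univ)] with y hy
    calc g q y ≤ g q y + (Φ (Ioc (q : ℝ) (r : ℝ))).rnDeriv (Φ univ) y := le_self_add
      _ = g r y := by rw [hgdef]; simp only []; rw [h1, hy]; rfl
  have hmono_all : ∀ᵐ y ∂(Φ univ), ∀ q r : ℚ, q ≤ r → g q y ≤ g r y := by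
    rw [ae_all_iff]
    intro q
    rw [ae_all_iff]
    intro r
    rcases le_or_gt q r with h | h
    · filter_upwards [hg_mono q r h] with y hy _
      exact hy
    · filter_upwards with y hy
      exact absurd hy (not_le.mpr h)
  have hfin_all : ∀ᵐ y ∂(Φ univ), ∀ q : ℚ, g q y ≤ 1 := by
    rw [ae_all_iff]
    intro q
    filter_upwards [hg_le_one q] with y hy
    exact hy
  -- the function f
  set f : (Fin n → ℝ) → ℚ → ℝ := fun y q => (g q y).toReal with hfdef
  have hf_meas : Measurable f :=
    measurable_pi_lambda _ fun q => (hg_meas q).ennreal_toReal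
  -- `tendsto 1 at +∞`
  have hTop : ∀ᵐ y ∂(Φ univ), Tendsto (f y) atTop (nhds 1) := by
    have hL_int : ∫⁻ y, ⨆ k : ℕ, g (k : ℚ) y ∂(Φ univ) = Φ univ univ := by
      rw [lintegral_iSup' (fun k => (hg_meas _).aemeasurable) ?_]
      · have h1 : ∀ k : ℕ, ∫⁻ y, g (k : ℚ) y ∂(Φ univ) = m' (Iic ((k : ℚ) : ℝ)) := by
          intro k
          rw [← setLIntegral_univ, hg_int, hΦuniv _ measurableSet_Iic]
        rw [iSup_congr h1]
        have h2 : Monotone (fun k : ℕ => Iic (((k : ℚ) : ℝ))) := by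
          intro a b hab
          exact Iic_subset_Iic.mpr (by exact_mod_cast hab)
        rw [← h2.directed_le.measure_iUnion]
        have h3 : ⋃ k : ℕ, Iic (((k : ℚ) : ℝ)) = univ := by
          rw [eq_univ_iff_forall]
          intro x
          obtain ⟨k, hk⟩ := exists_nat_ge x
          exact mem_iUnion.mpr ⟨k, by simpa using hk⟩
        rw [h3, hΦuniv univ MeasurableSet.univ]
      · filter_upwards [hmono_all] with y hy a b hab
        exact hy _ _ (by exact_mod_cast hab)
    have hL_le : ∀ᵐ y ∂(Φ univ), (⨆ k : ℕ, g (k : ℚ) y) ≤ 1 := by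
      filter_upwards [hfin_all] with y hy
      exact iSup_le fun k => hy _
    have hL_meas : Measurable fun y => ⨆ k : ℕ, g (k : ℚ) y :=
      Measurable.iSup fun k => hg_meas _
    have h1L : ∀ᵐ y ∂(Φ univ), (⨆ k : ℕ, g (k : ℚ) y) = 1 := by
      have hsub : ∫⁻ y, (1 - ⨆ k : ℕ, g (k : ℚ) y) ∂(Φ univ) = 0 := by
        rw [lintegral_sub hL_meas (by rw [hL_int]; exact measure_ne_top _ _) hL_le,
          hL_int, lintegral_one, tsub_self]
      have h0 := (lintegral_eq_zero_iff (measurable_const.sub hL_meas)).mp hsub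
      filter_upwards [h0, hL_le] with y h1 h2
      have h3 : (1 : ℝ≥0∞) ≤ ⨆ k : ℕ, g (k : ℚ) y := by
        have : (1 : ℝ≥0∞) - (⨆ k : ℕ, g (k : ℚ) y) = 0 := h1
        exact tsub_eq_zero_iff_le.mp this
      exact le_antisymm h2 h3
    filter_upwards [h1L, hmono_all, hfin_all] with y h1 hm hle1
    have hf_mono : Monotone (f y) := by
      intro a b hab
      exact ENNReal.toReal_mono (lt_of_le_of_lt (hle1 b) ENNReal.one_lt_top).ne (hm a b hab)
    have hseq : Tendsto (fun k : ℕ => f y (k : ℚ)) atTop (nhds 1) := by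
      have h2 : Tendsto (fun k : ℕ => g (k : ℚ) y) atTop (nhds 1) := by
        have hmn : Monotone fun k : ℕ => g (k : ℚ) y := fun a b hab => hm _ _ (by exact_mod_cast hab)
        have := tendsto_atTop_iSup hmn
        rwa [h1] at this
      have h3 := (ENNReal.tendsto_toReal (by norm_num : (1 : ℝ≥0∞) ≠ ⊤)).comp h2
      exact (by simpa using h3 : Tendsto (ENNReal.toReal ∘ fun k : ℕ => g (k : ℚ) y) atTop (nhds 1))
    exact (tendsto_iff_tendsto_subseq_of_monotone hf_mono
      tendsto_natCast_atTop_atTop).mpr hseq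
  -- `tendsto 0 at -∞`
  have hBot : ∀ᵐ y ∂(Φ univ), Tendsto (f y) atBot (nhds 0) := by
    have hI_int : ∫⁻ y, ⨅ k : ℕ, g (-(k : ℚ)) y ∂(Φ univ) = 0 := by
      rw [lintegral_iInf' (fun k => (hg_meas _).aemeasurable) ?_ ?_]
      · have h1 : ∀ k : ℕ, ∫⁻ y, g (-(k : ℚ)) y ∂(Φ univ) = m' (Iic ((-(k : ℚ) : ℚ) : ℝ)) := by
          intro k
          rw [← setLIntegral_univ, hg_int, hΦuniv _ measurableSet_Iic]
        rw [iInf_congr h1]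
        have hanti : Antitone (fun k : ℕ => Iic (((-(k : ℚ) : ℚ) : ℝ))) := by
          intro a b hab
          refine Iic_subset_Iic.mpr ?_
          push_cast
          exact neg_le_neg (by exact_mod_cast hab)
        have hiempty : ⋂ k : ℕ, Iic (((-(k : ℚ) : ℚ) : ℝ)) = ∅ := by
          rw [eq_empty_iff_forall_notMem]
          intro x hx
          rw [mem_iInter] at hx
          obtain ⟨k, hk⟩ := exists_nat_gt (-x)
          have := hx k
          rw [mem_Iic] at this
          push_cast at this
          linarith
        have htend := tendsto_measure_iInter_atTop
          (fun k => measurableSet_Iic.nullMeasurableSet) hanti ⟨0, measure_ne_top m' _⟩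
        rw [hiempty] at htend
        simp only [measure_empty] at htend
        have htend2 := tendsto_atTop_iInf
          (fun a b hab => measure_mono (hanti hab) :
            Antitone fun k : ℕ => m' (Iic (((-(k : ℚ) : ℚ) : ℝ))))
        exact tendsto_nhds_unique htend2 htend
      · filter_upwards [hmono_all] with y hy a b hab
        exact hy _ _ (neg_le_neg (by exact_mod_cast hab))
      · rw [← setLIntegral_univ, hg_int, hΦuniv _ measurableSet_Iic]
        exact measure_ne_top m' _
    have hI0 : ∀ᵐ y ∂(Φ univ), (⨅ k : ℕ, g (-(k : ℚ)) y) = 0 :=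
      (lintegral_eq_zero_iff (Measurable.iInf fun k => hg_meas _)).mp hI_int
    filter_upwards [hI0, hmono_all, hfin_all] with y h1 hm hle1
    have hf_mono : Monotone (f y) := by
      intro a b hab
      exact ENNReal.toReal_mono (lt_of_le_of_lt (hle1 b) ENNReal.one_lt_top).ne (hm a b hab)
    have hseq : Tendsto (fun k : ℕ => f y (-(k : ℚ))) atTop (nhds 0) := by
      have h2 : Tendsto (fun k : ℕ => g (-(k : ℚ)) y) atTop (nhds 0) := by
        have hanti : Antitone fun k : ℕ => g (-(k : ℚ)) y := by
          intro a b hab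
          exact hm _ _ (neg_le_neg (by exact_mod_cast hab))
        have := tendsto_atTop_iInf hanti
        rwa [h1] at this
      have h3 := (ENNReal.tendsto_toReal (by norm_num : (0 : ℝ≥0∞) ≠ ⊤)).comp h2
      exact (by simpa using h3 : Tendsto (ENNReal.toReal ∘ fun k : ℕ => g (-(k : ℚ)) y) atTop (nhds 0))
    have hganti : Antitone fun q : ℚ => f y (-q) := by
      intro a b hab
      exact hf_mono (by linarith)
    have h4 : Tendsto (fun q : ℚ => f y (-q)) atTop (nhds 0) :=
      (tendsto_iff_tendsto_subseq_of_antitone hganti tendsto_natCast_atTop_atTop).mpr hseq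
    have h5 := h4.comp (tendsto_neg_atBot_atTop : Tendsto (fun q : ℚ => -q) atBot atTop)
    have h6 : ((fun q : ℚ => f y (-q)) ∘ Neg.neg) = f y := by
      funext q; simp
    rwa [h6] at h5
  -- right continuity over the rationals
  have hInf : ∀ q : ℚ, ∀ᵐ y ∂(Φ univ), (⨅ r : Ioi q, f y (r : ℚ)) = f y q := by
    intro q
    set r : ℕ → ℚ := fun k => q + 1 / (k + 1) with hrdef
    have hrq : ∀ k, q < r k := by
      intro k
      have h0 : (0 : ℚ) < 1 / ((k : ℚ) + 1) := by positivity
      rw [hrdef]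
      simpa using h0
    have hr_anti : ∀ a b : ℕ, a ≤ b → r b ≤ r a := by
      intro a b hab
      have h2 : (1 : ℚ) / ((b : ℚ) + 1) ≤ 1 / ((a : ℚ) + 1) := by
        apply one_div_le_one_div_of_le (by positivity)
        exact add_le_add_left (by exact_mod_cast hab) 1
      rw [hrdef]
      simpa using h2
    have hrcast : ∀ k : ℕ, ((r k : ℚ) : ℝ) = (q : ℝ) + 1 / ((k : ℝ) + 1) := by
      intro k
      rw [hrdef]
      push_cast
      ring
    have hIoc_empty : ⋂ k : ℕ, Ioc ((q : ℝ)) ((r k : ℚ) : ℝ) = ∅ := by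
      rw [eq_empty_iff_forall_notMem]
      intro x hx
      rw [mem_iInter] at hx
      have hq : (q : ℝ) < x := (hx 0).1
      obtain ⟨k, hk⟩ := exists_nat_one_div_lt (sub_pos.mpr hq)
      have h2 := (hx k).2
      rw [hrcast k] at h2
      linarith
    have hIoc_anti : Antitone fun k : ℕ => Ioc ((q : ℝ)) ((r k : ℚ) : ℝ) := by
      intro a b hab
      exact Ioc_subset_Ioc_right (by exact_mod_cast hr_anti a b hab)
    have hIoc_inf : (⨅ k : ℕ, m' (Ioc ((q : ℝ)) ((r k : ℚ) : ℝ))) = 0 := by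
      have htend := tendsto_measure_iInter_atTop (μ := m')
        (fun k => measurableSet_Ioc.nullMeasurableSet) hIoc_anti ⟨0, measure_ne_top m' _⟩
      rw [hIoc_empty] at htend
      simp only [Function.comp_def, measure_empty] at htend
      exact tendsto_nhds_unique
        (tendsto_atTop_iInf fun a b hab => measure_mono (hIoc_anti hab)) htend
    have hkey : ∀ A : Set (Fin n → ℝ), MeasurableSet A → (Φ univ) A < ⊤ →
        ∫⁻ y in A, ⨅ k : ℕ, g (r k) y ∂(Φ univ) = ∫⁻ y in A, g q y ∂(Φ univ) := by
      intro A hA _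
      rw [hg_int]
      rw [lintegral_iInf' (fun k => (hg_meas _).aemeasurable.restrict) ?_ ?_]
      · have h1 : ∀ k : ℕ, ∫⁻ y in A, g (r k) y ∂(Φ univ)
            = Φ (Iic ((q : ℝ))) A + Φ (Ioc ((q : ℝ)) ((r k : ℚ) : ℝ)) A := by
          intro k
          rw [hg_int, hsplit q (r k) (hrq k).le, Measure.add_apply]
        rw [iInf_congr h1]
        refine le_antisymm ?_ (le_iInf fun k => le_self_add)
        calc (⨅ k : ℕ, Φ (Iic ((q : ℝ))) A + Φ (Ioc ((q : ℝ)) ((r k : ℚ) : ℝ)) A)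
            ≤ ⨅ k : ℕ, Φ (Iic ((q : ℝ))) A + m' (Ioc ((q : ℝ)) ((r k : ℚ) : ℝ)) := by
              refine iInf_mono fun k => add_le_add_right ?_ _
              rw [← hΦuniv _ measurableSet_Ioc]
              exact measure_mono (subset_univ A)
          _ = Φ (Iic ((q : ℝ))) A + ⨅ k : ℕ, m' (Ioc ((q : ℝ)) ((r k : ℚ) : ℝ)) :=
              ENNReal.add_iInf.symm
          _ = Φ (Iic ((q : ℝ))) A := by rw [hIoc_inf, add_zero]
      · refine ae_restrict_of_ae ?_
        filter_upwards [hmono_all] with y hy a b hab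
        exact hy _ _ (hr_anti a b hab)
      · rw [hg_int]
        exact ne_top_of_le_ne_top (measure_ne_top (Φ univ) A)
          (Measure.le_iff'.mp (hle _ measurableSet_Iic) A)
    have haeeq : (fun y => ⨅ k : ℕ, g (r k) y) =ᵐ[Φ univ] g q :=
      ae_eq_of_forall_setLIntegral_eq_of_sigmaFinite
        (Measurable.iInf fun k => hg_meas _) (hg_meas q) hkey
    filter_upwards [haeeq, hmono_all, hfin_all] with y hy hm hle1
    have hf_mono : Monotone (f y) := fun a b hab =>
      ENNReal.toReal_mono (lt_of_le_of_lt (hle1 b) ENNReal.one_lt_top).ne (hm a b hab)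
    refine le_antisymm ?_ (le_ciInf fun s => hf_mono (le_of_lt s.2))
    have hseq : Tendsto (fun k : ℕ => f y (r k)) atTop (nhds (f y q)) := by
      have h2 : Tendsto (fun k : ℕ => g (r k) y) atTop (nhds (g q y)) := by
        have hanti : Antitone fun k : ℕ => g (r k) y := fun a b hab => hm _ _ (hr_anti a b hab)
        have h3 := tendsto_atTop_iInf hanti
        have h4 : (⨅ k : ℕ, g (r k) y) = g q y := hy
        rwa [h4] at h3
      exact (ENNReal.tendsto_toReal (lt_of_le_of_lt (hle1 q) ENNReal.one_lt_top).ne).comp h2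
    have hbdd : BddBelow (range fun s : Ioi q => f y (s : ℚ)) :=
      ⟨0, by rintro _ ⟨s, rfl⟩; exact ENNReal.toReal_nonneg⟩
    refine ge_of_tendsto hseq (Eventually.of_forall fun k => ?_)
    exact ciInf_le hbdd ⟨r k, hrq k⟩
  -- almost every point is a Stieltjes point
  have h_pt : ∀ᵐ y ∂(Φ univ), IsRatStieltjesPoint f y := by
    have hInf_all : ∀ᵐ y ∂(Φ univ), ∀ q : ℚ, (⨅ r : Ioi q, f y (r : ℚ)) = f y q := by
      rw [ae_all_iff]; exact hInf
    filter_upwards [hTop, hBot, hInf_all, hmono_all, hfin_all] with y h1 h2 h3 hm hle1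
    exact ⟨fun a b hab => ENNReal.toReal_mono
      (lt_of_le_of_lt (hle1 b) ENNReal.one_lt_top).ne (hm a b hab), h1, h2, h3⟩
  -- the kernel
  set κ : Kernel (Fin n → ℝ) ℝ :=
    { toFun := fun y => (stieltjesOfMeasurableRat f hf_meas y).measure
      measurable' := measurable_measure_stieltjesOfMeasurableRat hf_meas } with hκdef
  haveI : IsMarkovKernel κ :=
    ⟨fun y => instIsProbabilityMeasure_stieltjesOfMeasurableRat hf_meas y⟩
  have hκapp : ∀ y, κ y = (stieltjesOfMeasurableRat f hf_meas y).measure := fun y => rfl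
  have hκrat : ∀ (q : ℚ) (A : Set (Fin n → ℝ)),
      ∫⁻ y in A, κ y (Iic ((q : ℝ))) ∂(Φ univ) = Φ (Iic ((q : ℝ))) A := by
    intro q A
    have hcong : ∀ᵐ y ∂(Φ univ), κ y (Iic ((q : ℝ))) = g q y := by
      filter_upwards [h_pt, hfin_all] with y hy hle1
      rw [hκapp, measure_stieltjesOfMeasurableRat_Iic, stieltjesOfMeasurableRat_eq,
        toRatCDF_of_isRatStieltjesPoint hy]
      exact ENNReal.ofReal_toReal (lt_of_le_of_lt (hle1 q) ENNReal.one_lt_top).ne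
    rw [lintegral_congr_ae (ae_restrict_of_ae hcong)]
    exact hg_int q A
  -- box formula
  have hbox : ∀ B : Fin n → Set ℝ, (∀ i, MeasurableSet (B i)) → ∀ C : Set ℝ, MeasurableSet C →
      ((Φ univ) ⊗ₘ κ) ((univ.pi B) ×ˢ C) = ν (Fin.snoc B C) := by
    intro B hB
    obtain ⟨mB, hmB0⟩ := hsep (Fin.last n) (Fin.snoc B univ)
      (snoc_measurable hB MeasurableSet.univ)
    have hmB : ∀ E : Set ℝ, MeasurableSet E → mB E = ν (Fin.snoc B E) := by
      intro E hE; rw [hmB0 E hE, Fin.update_snoc_last]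
    haveI : IsFiniteMeasure mB := by
      constructor
      rw [hmB univ MeasurableSet.univ]
      exact lt_of_le_of_lt (sepm_mono hsep (snoc_measurable hB MeasurableSet.univ)
        (fun _ => MeasurableSet.univ) (fun i => subset_univ _)) (lt_top_iff_ne_top.mpr hfin)
    have hθbox : ∀ q : ℚ,
        ((Φ univ) ⊗ₘ κ) ((univ.pi B) ×ˢ (Iic ((q : ℝ)))) = mB (Iic ((q : ℝ))) := by
      intro q
      rw [Measure.compProd_apply_prod (MeasurableSet.univ_pi hB) measurableSet_Iic, hκrat q _,
        hΦbox _ measurableSet_Iic B hB, ← hmB _ measurableSet_Iic]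
    set ρ : Measure ℝ :=
      ((((Φ univ) ⊗ₘ κ)).restrict ((univ.pi B) ×ˢ univ)).map Prod.snd with hρdef
    haveI : IsFiniteMeasure ρ := by
      constructor
      rw [hρdef, Measure.map_apply measurable_snd MeasurableSet.univ, preimage_univ,
        Measure.restrict_apply MeasurableSet.univ]
      exact measure_lt_top _ _
    have hρval : ∀ C : Set ℝ, MeasurableSet C →
        ρ C = ((Φ univ) ⊗ₘ κ) ((univ.pi B) ×ˢ C) := by
      intro C hC
      rw [hρdef, Measure.map_apply measurable_snd hC,
        Measure.restrict_apply (measurable_snd hC)]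
      congr 1
      ext p
      simp only [mem_inter_iff, mem_preimage, mem_prod, mem_univ, and_true]
      tauto
    have hkey : ρ = mB := by
      refine Measure.ext_of_Iic ρ mB ?_
      intro t
      obtain ⟨qs, hqs_gt, hqs_anti, hqs_tendsto⟩ := exists_rat_seq_antitone t
      have hanti : Antitone fun k : ℕ => Iic ((qs k : ℝ)) := fun a b hab =>
        Iic_subset_Iic.mpr (by exact_mod_cast hqs_anti a b hab)
      have hiinter : ⋂ k : ℕ, Iic ((qs k : ℝ)) = Iic t := by
        ext x
        simp only [mem_iInter, mem_Iic]
        constructor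
        · intro h
          exact ge_of_tendsto hqs_tendsto (Eventually.of_forall h)
        · intro h k
          exact h.trans (hqs_gt k).le
      have h1 := tendsto_measure_iInter_atTop (μ := ρ)
        (fun k => measurableSet_Iic.nullMeasurableSet) hanti ⟨0, measure_ne_top _ _⟩
      have h2 := tendsto_measure_iInter_atTop (μ := mB)
        (fun k => measurableSet_Iic.nullMeasurableSet) hanti ⟨0, measure_ne_top _ _⟩
      rw [hiinter] at h1 h2
      simp only [Function.comp_def] at h1 h2
      have heq : (fun k : ℕ => ρ (Iic ((qs k : ℝ)))) = fun k : ℕ => mB (Iic ((qs k : ℝ))) := by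
        funext k
        rw [hρval _ measurableSet_Iic, hθbox (qs k)]
      rw [heq] at h1
      exact tendsto_nhds_unique h1 h2
    intro C hC
    rw [← hρval C hC, hkey, hmB C hC]
  -- assemble the measure on `Fin (n+1) → ℝ`
  set e := MeasurableEquiv.piFinSuccAbove (fun _ : Fin (n + 1) => ℝ) (Fin.last n) with hedef
  set ψ := (MeasurableEquiv.prodComm : ((Fin n → ℝ) × ℝ) ≃ᵐ (ℝ × (Fin n → ℝ))).trans e.symm
    with hψdef
  have hψsnoc : ∀ (y : Fin n → ℝ) (t : ℝ), ψ (y, t) = Fin.snoc y t := by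
    intro y t
    have h0 : ψ (y, t) = e.symm (t, y) := rfl
    rw [h0, hedef]
    show (MeasurableEquiv.piFinSuccAbove (fun _ : Fin (n + 1) => ℝ) (Fin.last n)).symm (t, y) = _
    simp [MeasurableEquiv.piFinSuccAbove, Fin.insertNth_last', Fin.snocEquiv]
  refine ⟨(((Φ univ) ⊗ₘ κ)).map ψ, ?_, ?_⟩
  · constructor
    rw [Measure.map_apply ψ.measurable MeasurableSet.univ, preimage_univ]
    exact measure_lt_top _ _
  · intro B hB
    rw [Measure.map_apply ψ.measurable (MeasurableSet.univ_pi hB)]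
    have hpre : ψ ⁻¹' (univ.pi B) = (univ.pi fun j => B j.castSucc) ×ˢ (B (Fin.last n)) := by
      ext p
      obtain ⟨y, t⟩ := p
      simp only [mem_preimage, hψsnoc, mem_prod, Set.mem_pi, mem_univ, true_implies]
      constructor
      · intro h
        refine ⟨fun j => ?_, ?_⟩
        · have := h j.castSucc; rwa [Fin.snoc_castSucc] at this
        · have := h (Fin.last n); rwa [Fin.snoc_last] at this
      · rintro ⟨h1, h2⟩ j
        refine Fin.lastCases ?_ ?_ j
        · rwa [Fin.snoc_last]
        · intro i; rw [Fin.snoc_castSucc]; exact h1 i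
    rw [hpre, hbox _ (fun j => hB j.castSucc) _ (hB (Fin.last n))]
    congr 1
    funext j
    refine Fin.lastCases ?_ ?_ j
    · rw [Fin.snoc_last]
    · intro i; rw [Fin.snoc_castSucc]


lemma ext_measure : ∀ (n : ℕ) (ν : (Fin n → Set ℝ) → ENNReal), ν (fun _ => univ) ≠ ⊤ → SepM ν →
    ∃ μ : Measure (Fin n → ℝ), IsFiniteMeasure μ ∧
      ∀ B : Fin n → Set ℝ, (∀ i, MeasurableSet (B i)) → μ (univ.pi B) = ν B := by
  intro n
  induction n with
  | zero =>
    intro ν hfin hsep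
    refine ⟨(ν fun _ => univ) • Measure.dirac (fun i => i.elim0), ?_, ?_⟩
    · constructor
      rw [Measure.smul_apply, smul_eq_mul, measure_univ, mul_one]
      exact lt_top_iff_ne_top.mpr hfin
    · intro B hB
      have h1 : univ.pi B = univ := eq_univ_of_forall fun x i _ => i.elim0
      have h2 : B = fun _ => univ := funext fun i => i.elim0
      rw [h1, h2, Measure.smul_apply, smul_eq_mul, measure_univ, mul_one]
  | succ n IH =>
    intro ν hfin hsep
    exact step n IH ν hfin hsep

end Statement7Aux

/-- Let `F : ℝⁿ → [0,1]` be increasing in each variable, continuous from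
above, tending to `0` when some coordinate tends to `−∞` and to `1` when all coordinates
tend to `+∞`, and arising as `F(x) = ν((−∞,x₁],…,(−∞,xₙ])` for a set function `ν` on
products of Borel sets which is a measure in each coordinate separately (normalized by
`ν(ℝ,…,ℝ) = 1`).  Then there is a unique Borel probability measure `μ` on `ℝⁿ` with
`μ((−∞,x₁] × ⋯ × (−∞,xₙ]) = F(x₁,…,xₙ)` for all `x`. -/
theorem exists_unique_measure_of_distribution_function (n : ℕ)
    (ν : (Fin n → Set ℝ) → ENNReal) (F : (Fin n → ℝ) → ℝ)
    (hν1 : ν (fun _ => Set.univ) = 1)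
    (hνmeas : ∀ (i : Fin n) (B : Fin n → Set ℝ), (∀ j, MeasurableSet (B j)) →
      ∃ m : Measure ℝ, ∀ C : Set ℝ, MeasurableSet C → m C = ν (Function.update B i C))
    (hF : ∀ x : Fin n → ℝ, ν (fun i => Set.Iic (x i)) = ENNReal.ofReal (F x))
    (hrange : ∀ x, F x ∈ Set.Icc (0 : ℝ) 1)
    (hmono : ∀ (i : Fin n) (x : Fin n → ℝ), Monotone fun t => F (Function.update x i t))
    (ha : ∀ (x : Fin n → ℝ) (xk : ℕ → Fin n → ℝ),
      (∀ i, Antitone fun k => xk k i) → (∀ i, Tendsto (fun k => xk k i) atTop (nhds (x i))) →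
      Tendsto (fun k => F (xk k)) atTop (nhds (F x)))
    (hb : ∀ (x : Fin n → ℝ) (i : Fin n),
      Tendsto (fun t => F (Function.update x i t)) atBot (nhds 0))
    (hc : Tendsto (fun t : ℝ => F (fun _ => t)) atTop (nhds 1)) :
    ∃! μ : Measure (Fin n → ℝ), IsProbabilityMeasure μ ∧
      ∀ x : Fin n → ℝ, μ (Set.univ.pi fun i => Set.Iic (x i)) = ENNReal.ofReal (F x) := by
  classical
  obtain ⟨μ, hμfin, hμbox⟩ := Statement7Aux.ext_measure n ν
    (by rw [hν1]; exact ENNReal.one_ne_top) hνmeas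
  have hprob : IsProbabilityMeasure μ := by
    constructor
    have h := hμbox (fun _ => univ) (fun _ => MeasurableSet.univ)
    rw [Set.pi_univ] at h
    rw [h, hν1]
  have hval : ∀ x : Fin n → ℝ, μ (Set.univ.pi fun i => Set.Iic (x i)) = ENNReal.ofReal (F x) :=
    fun x => by rw [hμbox _ (fun i => measurableSet_Iic)]; exact hF x
  have hgen : MeasurableSpace.generateFrom
      (pi univ '' pi univ fun _ : Fin n => range (Iic : ℝ → Set ℝ)) = MeasurableSpace.pi := by
    refine generateFrom_eq_pi (fun _ => ?_) (fun _ => ?_)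
    · exact (borel_eq_generateFrom_Iic ℝ).symm.trans (BorelSpace.measurable_eq (α := ℝ)).symm
    · refine ⟨fun k => Iic (k : ℝ), fun k => ⟨(k : ℝ), rfl⟩, ?_⟩
      rw [eq_univ_iff_forall]
      intro x
      obtain ⟨k, hk⟩ := exists_nat_ge x
      exact mem_iUnion.mpr ⟨k, hk⟩
  refine ⟨μ, ⟨hprob, hval⟩, ?_⟩
  rintro μ' ⟨hμ'prob, hμ'val⟩
  refine ext_of_generate_finite _ hgen.symm (IsPiSystem.pi fun _ => isPiSystem_Iic) ?_ ?_
  · rintro s ⟨B, hBmem, rfl⟩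
    choose x hx using fun i => hBmem i (mem_univ i)
    have hBx : B = fun i => Iic (x i) := funext fun i => (hx i).symm
    rw [hBx, hμ'val x, hval x]
  · rw [measure_univ, measure_univ]
end

section
/- Let (X₁,d₁),…,(Xₙ,dₙ) be uncountable complete separable metric spaces, and let ν : B(X₁) × ⋯ × B(Xₙ) → [0,∞) be a set function that is a countably additive measure in each coordinate separately (with the other coordinates fixed). Then there exists a unique measure μ on the product σ-algebra ⊗ᵢ B(Xᵢ) such that μ(B₁ × ⋯ × Bₙ) = ν(B₁,…,Bₙ) for all Borel sets Bᵢ ⊆ Xᵢ. -/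
open MeasureTheory ProbabilityTheory Set Filter
open scoped ENNReal Topology

section Aux

/-- The Borel σ-algebra of `ℝ` is generated by rational `Iic`s. -/
lemma real_generateFrom_Iic_rat :
    (inferInstance : MeasurableSpace ℝ)
      = MeasurableSpace.generateFrom {s : Set ℝ | ∃ q : ℚ, s = Iic (q : ℝ)} := by
  refine le_antisymm ?_ (MeasurableSpace.generateFrom_le ?_)
  · rw [show (inferInstance : MeasurableSpace ℝ) = borel ℝ from BorelSpace.measurable_eq,
      Real.borel_eq_generateFrom_Iio_rat]
    refine MeasurableSpace.generateFrom_le ?_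
    rintro s hs
    simp only [mem_iUnion, mem_singleton_iff] at hs
    obtain ⟨a, rfl⟩ := hs
    have : Iio ((a : ℝ)) = ⋃ n : ℕ, Iic (((a - ((n : ℚ) + 1)⁻¹ : ℚ) : ℝ)) := by
      ext x
      simp only [mem_Iio, mem_iUnion, mem_Iic]
      constructor
      · intro hx
        obtain ⟨n, hn⟩ := exists_nat_one_div_lt (sub_pos.2 hx)
        refine ⟨n, ?_⟩
        push_cast
        rw [one_div] at hn
        linarith
      · rintro ⟨n, hn⟩
        have h1 : (0 : ℝ) < ((n : ℝ) + 1)⁻¹ := by positivity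
        have : ((a - ((n : ℚ) + 1)⁻¹ : ℚ) : ℝ) = (a : ℝ) - ((n : ℝ) + 1)⁻¹ := by push_cast; ring
        rw [this] at hn
        linarith
    rw [this]
    exact MeasurableSet.iUnion fun n =>
      MeasurableSpace.measurableSet_generateFrom ⟨_, rfl⟩
  · rintro s ⟨q, rfl⟩
    exact measurableSet_Iic

lemma isPiSystem_Iic_rat : IsPiSystem {s : Set ℝ | ∃ q : ℚ, s = Iic (q : ℝ)} := by
  rintro s ⟨q, rfl⟩ t ⟨r, rfl⟩ -
  exact ⟨min q r, by push_cast [Iic_inter_Iic]; norm_cast⟩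

end Aux


section Core

variable {Z : Type*} [MeasurableSpace Z]

/-- Core extension lemma: a bimeasure on `Z × ℝ` extends to a measure. -/
lemma exists_measure_prod_real (β : Set Z → Set ℝ → ℝ≥0∞)
    (hfin : β univ univ ≠ ⊤)
    (h1 : ∀ A : Set Z, MeasurableSet A →
      ∃ m : Measure ℝ, ∀ S, MeasurableSet S → m S = β A S)
    (h2 : ∀ S : Set ℝ, MeasurableSet S →
      ∃ m : Measure Z, ∀ A, MeasurableSet A → m A = β A S) :
    ∃ μ : Measure (Z × ℝ), ∀ A S, MeasurableSet A → MeasurableSet S →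
      μ (A ×ˢ S) = β A S := by
  classical
  obtain ⟨ρ, hρ⟩ := h2 univ MeasurableSet.univ
  haveI hρfin : IsFiniteMeasure ρ :=
    ⟨by rw [hρ univ MeasurableSet.univ]; exact hfin.lt_top⟩
  -- the measures in the second coordinate
  have hmA : ∀ A : Set Z, MeasurableSet A →
      ∃ m : Measure ℝ, (∀ S, MeasurableSet S → m S = β A S) ∧ IsFiniteMeasure m := by
    intro A hA
    obtain ⟨m, hm⟩ := h1 A hA
    refine ⟨m, hm, ⟨?_⟩⟩
    rw [hm univ MeasurableSet.univ, ← hρ A hA]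
    exact (measure_mono (subset_univ A)).trans_lt (measure_lt_top ρ univ)
  -- monotonicity of β in the second argument
  have hmono2 : ∀ A : Set Z, MeasurableSet A → ∀ S T : Set ℝ, MeasurableSet S →
      MeasurableSet T → S ⊆ T → β A S ≤ β A T := by
    intro A hA S T hS hT hST
    obtain ⟨m, hm, _⟩ := hmA A hA
    rw [← hm S hS, ← hm T hT]
    exact measure_mono hST
  have hβle : ∀ A : Set Z, MeasurableSet A → ∀ S : Set ℝ, MeasurableSet S →
      β A S ≤ ρ A := by
    intro A hA S hS
    rw [hρ A hA]
    exact hmono2 A hA S univ hS MeasurableSet.univ (subset_univ S)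
  -- the measures in the first coordinate, for rational Iic sets
  have hmS : ∀ S : Set ℝ, MeasurableSet S →
      ∃ m : Measure Z, (∀ A, MeasurableSet A → m A = β A S) ∧ m ≪ ρ ∧
        IsFiniteMeasure m := by
    intro S hS
    obtain ⟨m, hm⟩ := h2 S hS
    refine ⟨m, hm, ?_, ⟨?_⟩⟩
    · refine Measure.AbsolutelyContinuous.mk fun A hA hA0 => ?_
      rw [hm A hA]
      refine le_antisymm ?_ zero_le
      rw [← hA0]
      exact hβle A hA S hS
    · rw [hm univ MeasurableSet.univ]
      exact (hβle univ MeasurableSet.univ S hS).trans_lt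
        (by rw [hρ univ MeasurableSet.univ]; exact hfin.lt_top)
  -- the density functions
  set ψ : ℚ → Measure Z := fun q => (hmS (Iic (q : ℝ)) measurableSet_Iic).choose with hψdef
  have hψ : ∀ q : ℚ, (∀ A, MeasurableSet A → ψ q A = β A (Iic (q : ℝ))) ∧
      ψ q ≪ ρ ∧ IsFiniteMeasure (ψ q) := fun q =>
    (hmS (Iic (q : ℝ)) measurableSet_Iic).choose_spec
  set g : ℚ → Z → ℝ≥0∞ := fun q => (ψ q).rnDeriv ρ with hgdef
  have hgmeas : ∀ q, Measurable (g q) := fun q => Measure.measurable_rnDeriv _ _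
  -- key integral identity
  have L1 : ∀ (q : ℚ) (A : Set Z), MeasurableSet A →
      ∫⁻ z in A, g q z ∂ρ = β A (Iic (q : ℝ)) := by
    intro q A hA
    haveI := (hψ q).2.2
    rw [Measure.setLIntegral_rnDeriv' (hψ q).2.1 hA]
    exact (hψ q).1 A hA
  have hint_ne_top : ∀ (q : ℚ) (A : Set Z), MeasurableSet A →
      ∫⁻ z in A, g q z ∂ρ ≠ ⊤ := by
    intro q A hA
    rw [L1 q A hA]
    exact ((hβle A hA _ measurableSet_Iic).trans_lt (measure_lt_top ρ A)).ne
  -- a.e. monotonicity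
  have hmono_pair : ∀ q q' : ℚ, q ≤ q' → g q ≤ᵐ[ρ] g q' := by
    intro q q' hqq'
    refine ae_le_of_forall_setLIntegral_le_of_sigmaFinite (hgmeas q) fun A hA _ => ?_
    rw [L1 q A hA, L1 q' A hA]
    exact hmono2 A hA _ _ measurableSet_Iic measurableSet_Iic
      (Iic_subset_Iic.2 (by exact_mod_cast hqq'))
  have hmono_ae : ∀ᵐ z ∂ρ, ∀ q q' : ℚ, q ≤ q' → g q z ≤ g q' z := by
    rw [ae_all_iff]
    intro q
    rw [ae_all_iff]
    intro q'
    by_cases h : q ≤ q'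
    · exact (hmono_pair q q' h).mono fun z hz _ => hz
    · exact ae_of_all _ fun z hz => absurd hz h
  -- a.e. bounded by one
  have hle_one : ∀ᵐ z ∂ρ, ∀ q : ℚ, g q z ≤ 1 := by
    rw [ae_all_iff]
    intro q
    refine ae_le_of_forall_setLIntegral_le_of_sigmaFinite (hgmeas q) fun A hA _ => ?_
    rw [L1 q A hA, setLIntegral_one]
    exact hβle A hA _ measurableSet_Iic
  -- a.e. limit one at +∞
  have hsup : ∀ᵐ z ∂ρ, ⨆ n : ℕ, g (n : ℚ) z = 1 := by
    refine ae_eq_of_forall_setLIntegral_eq_of_sigmaFinite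
      (by exact Measurable.iSup fun n => hgmeas _) measurable_one fun A hA _ => ?_
    rw [setLIntegral_one]
    rw [lintegral_iSup' (fun n => (hgmeas _).aemeasurable)
      (ae_restrict_of_ae (hmono_ae.mono fun z hz n m hnm =>
        hz _ _ (by exact_mod_cast hnm)))]
    have h1 : ∀ n : ℕ, ∫⁻ z in A, g (n : ℚ) z ∂ρ = β A (Iic ((n : ℚ) : ℝ)) :=
      fun n => L1 _ A hA
    simp_rw [h1]
    obtain ⟨m, hm, _⟩ := hmA A hA
    have h2 : ∀ n : ℕ, β A (Iic ((n : ℚ) : ℝ)) = m (Iic ((n : ℚ) : ℝ)) :=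
      fun n => (hm _ measurableSet_Iic).symm
    simp_rw [h2]
    rw [← Directed.measure_iUnion (fun i j => ⟨max i j,
        Iic_subset_Iic.2 (by exact_mod_cast le_max_left i j),
        Iic_subset_Iic.2 (by exact_mod_cast le_max_right i j)⟩)]
    have : ⋃ n : ℕ, Iic (((n : ℚ) : ℝ)) = univ := by
      refine eq_univ_iff_forall.2 fun x => ?_
      obtain ⟨n, hn⟩ := exists_nat_ge x
      exact mem_iUnion.2 ⟨n, by exact_mod_cast hn⟩
    rw [this, hm univ MeasurableSet.univ, hρ A hA]
  -- a.e. limit zero at -∞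
  have hinf : ∀ᵐ z ∂ρ, ⨅ n : ℕ, g (-(n : ℚ)) z = 0 := by
    refine ae_eq_of_forall_setLIntegral_eq_of_sigmaFinite
      (by exact Measurable.iInf fun n => hgmeas _) measurable_zero fun A hA _ => ?_
    rw [lintegral_zero]
    rw [lintegral_iInf' (fun n => (hgmeas _).aemeasurable)
      (ae_restrict_of_ae (hmono_ae.mono fun z hz n m hnm =>
        hz _ _ (by exact_mod_cast neg_le_neg (Nat.cast_le.2 hnm))))
      (hint_ne_top _ A hA)]
    have h1 : ∀ n : ℕ, ∫⁻ z in A, g (-(n : ℚ)) z ∂ρ = β A (Iic ((-(n : ℚ) : ℚ) : ℝ)) :=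
      fun n => L1 _ A hA
    simp_rw [h1]
    obtain ⟨m, hm, hmfin⟩ := hmA A hA
    have h2 : ∀ n : ℕ, β A (Iic ((-(n : ℚ) : ℚ) : ℝ)) = m (Iic ((-(n : ℚ) : ℚ) : ℝ)) :=
      fun n => (hm _ measurableSet_Iic).symm
    simp_rw [h2]
    rw [← Directed.measure_iInter (fun n => measurableSet_Iic.nullMeasurableSet)
      (fun i j => ⟨max i j, Iic_subset_Iic.2 (by push_cast; simp),
        Iic_subset_Iic.2 (by push_cast; simp)⟩)
      ⟨0, measure_ne_top m _⟩]
    have : ⋂ n : ℕ, Iic (((-(n : ℚ) : ℚ)) : ℝ) = ∅ := by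
      refine eq_empty_iff_forall_notMem.2 fun x hx => ?_
      obtain ⟨n, hn⟩ := exists_nat_gt (-x)
      have := mem_iInter.1 hx n
      rw [mem_Iic] at this
      push_cast at this
      linarith
    rw [this, measure_empty]
  -- a.e. right continuity
  have hrc : ∀ᵐ z ∂ρ, ∀ q : ℚ, ⨅ n : ℕ, g (q + ((n : ℚ) + 1)⁻¹) z = g q z := by
    rw [ae_all_iff]
    intro q
    refine ae_eq_of_forall_setLIntegral_eq_of_sigmaFinite
      (by exact Measurable.iInf fun n => hgmeas _) (hgmeas q) fun A hA _ => ?_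
    rw [lintegral_iInf' (fun n => (hgmeas _).aemeasurable)
      (ae_restrict_of_ae (hmono_ae.mono fun z hz n m hnm => hz _ _ (by
        have : ((m : ℚ) + 1)⁻¹ ≤ ((n : ℚ) + 1)⁻¹ := by
          apply inv_anti₀
          · positivity
          · exact_mod_cast Nat.succ_le_succ hnm
        linarith)))
      (hint_ne_top _ A hA)]
    rw [L1 q A hA]
    have h1 : ∀ n : ℕ, ∫⁻ z in A, g (q + ((n : ℚ) + 1)⁻¹) z ∂ρ
        = β A (Iic (((q + ((n : ℚ) + 1)⁻¹ : ℚ)) : ℝ)) := fun n => L1 _ A hA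
    simp_rw [h1]
    obtain ⟨m, hm, hmfin⟩ := hmA A hA
    have h2 : ∀ n : ℕ, β A (Iic (((q + ((n : ℚ) + 1)⁻¹ : ℚ)) : ℝ))
        = m (Iic (((q + ((n : ℚ) + 1)⁻¹ : ℚ)) : ℝ)) :=
      fun n => (hm _ measurableSet_Iic).symm
    simp_rw [h2]
    have key : ∀ i j : ℕ, i ≤ j →
        (((q + ((j : ℚ) + 1)⁻¹ : ℚ)) : ℝ) ≤ (((q + ((i : ℚ) + 1)⁻¹ : ℚ)) : ℝ) := by
      intro i j hij
      have : ((j : ℚ) + 1)⁻¹ ≤ ((i : ℚ) + 1)⁻¹ := by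
        apply inv_anti₀
        · positivity
        · exact_mod_cast Nat.succ_le_succ hij
      exact_mod_cast add_le_add_right this q
    rw [← Directed.measure_iInter (fun n => measurableSet_Iic.nullMeasurableSet)
      (fun i j => ⟨max i j, Iic_subset_Iic.2 (key i _ (le_max_left i j)),
        Iic_subset_Iic.2 (key j _ (le_max_right i j))⟩)
      ⟨0, measure_ne_top m _⟩]
    have : ⋂ n : ℕ, Iic (((q + ((n : ℚ) + 1)⁻¹ : ℚ)) : ℝ) = Iic ((q : ℝ)) := by
      ext x
      simp only [mem_iInter, mem_Iic]
      constructor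
      · intro hx
        refine le_of_forall_pos_le_add fun ε hε => ?_
        obtain ⟨n, hn⟩ := exists_nat_one_div_lt hε
        refine (hx n).trans ?_
        push_cast
        rw [one_div] at hn
        linarith
      · intro hx n
        have h1 : (0 : ℝ) < ((n : ℝ) + 1)⁻¹ := by positivity
        push_cast
        linarith
    rw [this]
    exact hm _ measurableSet_Iic
  -- the CDF candidate
  set f : Z → ℚ → ℝ := fun z q => (g q z).toReal with hfdef
  have hf : Measurable f :=
    measurable_pi_iff.2 fun q => (hgmeas q).ennreal_toReal
  -- a.e. Stieltjes point
  have hpt : ∀ᵐ z ∂ρ, IsRatStieltjesPoint f z := by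
    filter_upwards [hmono_ae, hle_one, hsup, hinf, hrc] with z hz1 hz2 hz3 hz4 hz5
    have hne : ∀ q : ℚ, g q z ≠ ⊤ := fun q => ((hz2 q).trans_lt (by norm_num)).ne
    have hfle1 : ∀ q : ℚ, f z q ≤ 1 := fun q => by
      have := ENNReal.toReal_mono (by norm_num) (hz2 q)
      simpa using this
    have hf0 : ∀ q : ℚ, 0 ≤ f z q := fun q => ENNReal.toReal_nonneg
    have hmo : Monotone (f z) := fun q q' h => ENNReal.toReal_mono (hne q') (hz1 q q' h)
    constructor
    · exact hmo
    · -- tendsto atTop 1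
      have hbdd : BddAbove (range (f z)) := ⟨1, by rintro x ⟨q, rfl⟩; exact hfle1 q⟩
      have h := tendsto_atTop_ciSup hmo hbdd
      have hsup_eq : ⨆ q : ℚ, f z q = 1 := by
        refine le_antisymm (ciSup_le hfle1) ?_
        refine le_of_forall_pos_le_add fun ε hε => ?_
        by_cases hε1 : 1 ≤ ε
        · calc (1 : ℝ) ≤ f z 0 + ε := by have := hf0 0; linarith
            _ ≤ (⨆ q : ℚ, f z q) + ε := by
              have := le_ciSup hbdd (0 : ℚ); linarith
        · push_neg at hε1
          have hc : ENNReal.ofReal (1 - ε) < 1 := by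
            rw [← ENNReal.ofReal_one]
            exact ENNReal.ofReal_lt_ofReal_iff_of_nonneg (by linarith) |>.2 (by linarith)
          rw [← hz3] at hc
          obtain ⟨n, hn⟩ := lt_iSup_iff.1 hc
          have h1 : 1 - ε < f z (n : ℚ) := by
            have := ENNReal.toReal_strict_mono (hne _) hn
            rwa [ENNReal.toReal_ofReal (by linarith)] at this
          have := le_ciSup hbdd ((n : ℕ) : ℚ)
          linarith
      rwa [hsup_eq] at h
    · -- tendsto atBot 0
      have hbdd : BddBelow (range (f z)) := ⟨0, by rintro x ⟨q, rfl⟩; exact hf0 q⟩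
      have h := tendsto_atBot_ciInf hmo hbdd
      have hinf_eq : ⨅ q : ℚ, f z q = 0 := by
        refine le_antisymm ?_ (le_ciInf hf0)
        refine le_of_forall_pos_le_add fun ε hε => ?_
        have hε' : (0 : ℝ≥0∞) < ENNReal.ofReal ε := ENNReal.ofReal_pos.2 hε
        rw [← hz4] at hε'
        obtain ⟨n, hn⟩ := iInf_lt_iff.1 hε'
        have h1 : f z (-(n : ℚ)) < ε := by
          have := ENNReal.toReal_strict_mono ENNReal.ofReal_ne_top hn
          rwa [ENNReal.toReal_ofReal hε.le] at this
        have := ciInf_le hbdd (-(n : ℚ))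
        linarith
      rwa [hinf_eq] at h
    · -- right continuity
      intro q
      haveI : Nonempty (Ioi q) := nonempty_Ioi.to_subtype
      have hbdd : BddBelow (range fun r : Ioi q => f z r) :=
        ⟨0, by rintro x ⟨r, rfl⟩; exact hf0 r⟩
      refine le_antisymm ?_ (le_ciInf fun r => hmo (le_of_lt r.2))
      refine le_of_forall_pos_le_add fun ε hε => ?_
      have hlt : ⨅ n : ℕ, g (q + ((n : ℚ) + 1)⁻¹) z < g q z + ENNReal.ofReal ε := by
        rw [hz5 q]
        exact ENNReal.lt_add_right (hne q) (ENNReal.ofReal_pos.2 hε).ne'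
      obtain ⟨n, hn⟩ := iInf_lt_iff.1 hlt
      have h1 : f z (q + ((n : ℚ) + 1)⁻¹) < f z q + ε := by
        have h2 := ENNReal.toReal_strict_mono
          (by exact ENNReal.add_ne_top.2 ⟨hne q, ENNReal.ofReal_ne_top⟩) hn
        rwa [ENNReal.toReal_add (hne q) ENNReal.ofReal_ne_top,
          ENNReal.toReal_ofReal hε.le] at h2
      have hmem : q + ((n : ℚ) + 1)⁻¹ ∈ Ioi q := by
        simp only [mem_Ioi]
        have : (0 : ℚ) < ((n : ℚ) + 1)⁻¹ := by positivity
        linarith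
      have := ciInf_le hbdd (⟨_, hmem⟩ : Ioi q)
      simp only at this
      linarith
  -- the kernel
  have hK : ∀ᵐ z ∂ρ, ∀ q : ℚ,
      (stieltjesOfMeasurableRat f hf z).measure (Iic ((q : ℝ))) = g q z := by
    filter_upwards [hpt, hle_one] with z hz1 hz2 q
    rw [measure_stieltjesOfMeasurableRat_Iic hf z ((q : ℝ)),
      stieltjesOfMeasurableRat_eq, toRatCDF_of_isRatStieltjesPoint hz1]
    exact ENNReal.ofReal_toReal (((hz2 q).trans_lt (by norm_num)).ne)
  set K : ProbabilityTheory.Kernel Z ℝ :=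
    ⟨fun z => (stieltjesOfMeasurableRat f hf z).measure,
      measurable_measure_stieltjesOfMeasurableRat hf⟩ with hKdef
  have hKapp : ∀ z, K z = (stieltjesOfMeasurableRat f hf z).measure := fun z => rfl
  haveI : IsMarkovKernel K := ⟨fun z =>
    inferInstanceAs (IsProbabilityMeasure ((stieltjesOfMeasurableRat f hf z).measure))⟩
  refine ⟨ρ.compProd K, fun A S hA hS => ?_⟩
  obtain ⟨mA', hmA', hmA'fin⟩ := hmA A hA
  set μ2 := ((ρ.compProd K).restrict (A ×ˢ univ)).map Prod.snd with hμ2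
  have hμ2app : ∀ S : Set ℝ, MeasurableSet S → μ2 S = (ρ.compProd K) (A ×ˢ S) := by
    intro S hS
    rw [hμ2, Measure.map_apply measurable_snd hS,
      Measure.restrict_apply (measurable_snd hS)]
    congr 1
    ext ⟨a, b⟩
    simp [and_comm]
  haveI : IsFiniteMeasure μ2 := by
    constructor
    rw [hμ2app univ MeasurableSet.univ]
    calc (ρ.compProd K) (A ×ˢ univ) ≤ (ρ.compProd K) univ := measure_mono (subset_univ _)
      _ = ρ univ := Measure.compProd_apply_univ
      _ < ⊤ := measure_lt_top ρ univ
  haveI := hmA'fin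
  have hprod : ∀ q : ℚ, (ρ.compProd K) (A ×ˢ Iic ((q : ℝ))) = β A (Iic ((q : ℝ))) := by
    intro q
    rw [Measure.compProd_apply_prod hA measurableSet_Iic, ← L1 q A hA]
    refine lintegral_congr_ae (ae_restrict_of_ae (hK.mono fun z hz => ?_))
    exact hz q
  have heq : mA' = μ2 := by
    refine ext_of_generate_finite _ real_generateFrom_Iic_rat isPiSystem_Iic_rat ?_ ?_
    · rintro s ⟨q, rfl⟩
      rw [hmA' _ measurableSet_Iic, hμ2app _ measurableSet_Iic, hprod q]
    · rw [hmA' univ MeasurableSet.univ, hμ2app univ MeasurableSet.univ,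
        Measure.compProd_apply_prod hA MeasurableSet.univ]
      have : ∀ᵐ z ∂(ρ.restrict A), K z univ = 1 :=
        ae_of_all _ fun z => measure_univ
      rw [lintegral_congr_ae this, setLIntegral_one, hρ A hA]
  rw [← hmA' S hS, heq, hμ2app S hS]

end Core


universe u v

section Transfer

/-- Bimeasure extension with second factor an uncountable standard Borel space. -/
lemma exists_measure_prod {Z : Type u} {Y : Type v} [MeasurableSpace Z] [MeasurableSpace Y]
    [StandardBorelSpace Y] [Uncountable Y] (β : Set Z → Set Y → ℝ≥0∞)
    (hfin : β univ univ ≠ ⊤)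
    (h1 : ∀ A : Set Z, MeasurableSet A →
      ∃ m : Measure Y, ∀ S, MeasurableSet S → m S = β A S)
    (h2 : ∀ S : Set Y, MeasurableSet S →
      ∃ m : Measure Z, ∀ A, MeasurableSet A → m A = β A S) :
    ∃ μ : Measure (Z × Y), ∀ A S, MeasurableSet A → MeasurableSet S →
      μ (A ×ˢ S) = β A S := by
  obtain ⟨e⟩ : Nonempty (Y ≃ᵐ ℝ) :=
    ⟨PolishSpace.measurableEquivOfNotCountable not_countable not_countable⟩
  set β' : Set Z → Set ℝ → ℝ≥0∞ := fun A T => β A (e ⁻¹' T) with hβ'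
  have h1' : ∀ A : Set Z, MeasurableSet A →
      ∃ m : Measure ℝ, ∀ T, MeasurableSet T → m T = β' A T := by
    intro A hA
    obtain ⟨m, hm⟩ := h1 A hA
    refine ⟨m.map e, fun T hT => ?_⟩
    rw [Measure.map_apply e.measurable hT, hm _ (e.measurable hT)]
  have h2' : ∀ T : Set ℝ, MeasurableSet T →
      ∃ m : Measure Z, ∀ A, MeasurableSet A → m A = β' A T := by
    intro T hT
    obtain ⟨m, hm⟩ := h2 (e ⁻¹' T) (e.measurable hT)
    exact ⟨m, hm⟩
  have hfin' : β' univ univ ≠ ⊤ := by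
    rw [hβ']
    simpa using hfin
  obtain ⟨μ', hμ'⟩ := exists_measure_prod_real (Z := Z) β' hfin' h1' h2'
  refine ⟨μ'.map (fun p => (p.1, e.symm p.2)), fun A S hA hS => ?_⟩
  rw [Measure.map_apply (by exact measurable_fst.prodMk (e.symm.measurable.comp measurable_snd))
    (hA.prod hS)]
  have hpre : (fun p : Z × ℝ => (p.1, e.symm p.2)) ⁻¹' (A ×ˢ S)
      = A ×ˢ (e.symm ⁻¹' S) := rfl
  rw [hpre, hμ' A _ hA (e.symm.measurable hS)]
  show β A (e ⁻¹' (e.symm ⁻¹' S)) = β A S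
  rw [show e ⁻¹' (e.symm ⁻¹' S) = S from by ext y; simp]

end Transfer

section Unique

/-- Uniqueness of measures on a countable product given by rectangles. -/
lemma pi_measure_unique {n : ℕ} {X : Fin n → Type u} [∀ i, MeasurableSpace (X i)]
    (μ₁ μ₂ : Measure (∀ i, X i)) [IsFiniteMeasure μ₂]
    (h : ∀ B : ∀ i, Set (X i), (∀ i, MeasurableSet (B i)) →
      μ₁ (univ.pi B) = μ₂ (univ.pi B)) : μ₁ = μ₂ := by
  have huniv : μ₁ univ = μ₂ univ := by
    have := h (fun _ => univ) (fun _ => MeasurableSet.univ)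
    rwa [pi_univ] at this
  haveI : IsFiniteMeasure μ₁ :=
    ⟨by rw [huniv]; exact measure_lt_top μ₂ univ⟩
  refine ext_of_generate_finite _ generateFrom_pi.symm isPiSystem_pi ?_ huniv
  rintro s ⟨B, hB, rfl⟩
  exact h B fun i => hB i (mem_univ i)

end Unique



lemma aux_product_measure : ∀ (n : ℕ) (X : Fin n → Type u)
    (_mX : ∀ i, MeasurableSpace (X i)),
    (∀ i, StandardBorelSpace (X i)) → (∀ i, Uncountable (X i)) →
    ∀ (ν : (∀ i, Set (X i)) → ℝ≥0∞), (∀ B, ν B ≠ ⊤) →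
    (∀ (i : Fin n) (B : ∀ j, Set (X j)), (∀ j, MeasurableSet (B j)) →
      ∃ m : Measure (X i), ∀ C : Set (X i), MeasurableSet C →
        m C = ν (Function.update B i C)) →
    ∃! μ : Measure (∀ i, X i),
      ∀ B : ∀ i, Set (X i), (∀ i, MeasurableSet (B i)) → μ (Set.univ.pi B) = ν B := by
  intro n
  induction n with
  | zero =>
    intro X mX sbX uX ν hfin hνmeas
    set x₀ : (∀ i : Fin 0, X i) := fun i => i.elim0 with hx₀
    have hpi : ∀ B : ∀ i, Set (X i), univ.pi B = univ := by
      intro B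
      refine eq_univ_iff_forall.2 fun x => ?_
      intro i _
      exact i.elim0
    have hν : ∀ B : ∀ i, Set (X i), ν B = ν (fun i => i.elim0) := by
      intro B
      exact congrArg ν (funext fun i => i.elim0)
    refine ⟨ν (fun i => i.elim0) • Measure.dirac x₀, fun B hB => ?_, fun μ' hμ' => ?_⟩
    · rw [hpi B, hν B]
      simp
    · have huniv : μ' univ = ν (fun i => i.elim0) := by
        have := hμ' (fun i => i.elim0) (fun i => i.elim0)
        rwa [hpi] at this
      ext s hs
      rcases s.eq_empty_or_nonempty with rfl | ⟨y, hy⟩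
      · simp
      · have hsu : s = univ := by
          refine eq_univ_iff_forall.2 fun x => ?_
          rwa [Subsingleton.elim x y]
        subst hsu
        rw [huniv]
        simp
  | succ n ih =>
    intro X mX sbX uX ν hfin hνmeas
    -- notation
    set Y := ∀ j : Fin n, X j.succ with hY
    set cns : Set (X 0) → (∀ j : Fin n, Set (X j.succ)) → ∀ i, Set (X i) :=
      fun A B => Fin.cons A B with hcns
    have hconsmeas : ∀ (A : Set (X 0)) (B : ∀ j : Fin n, Set (X j.succ)),
        MeasurableSet A → (∀ j, MeasurableSet (B j)) →
        ∀ i, MeasurableSet (cns A B i) := by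
      intro A B hA hB i
      refine Fin.cases ?_ ?_ i
      · show MeasurableSet ((Fin.cons A B : ∀ i, Set (X i)) 0)
        rwa [Fin.cons_zero]
      · intro j
        show MeasurableSet ((Fin.cons A B : ∀ i, Set (X i)) j.succ)
        rw [Fin.cons_succ]
        exact hB j
    -- property P
    set P : Set (X 0) → Measure Y → Prop := fun A μ =>
      ∀ B : ∀ j : Fin n, Set (X j.succ), (∀ j, MeasurableSet (B j)) →
        μ (univ.pi B) = ν (cns A B) with hP
    have H : ∀ A : Set (X 0), MeasurableSet A → ∃! μ : Measure Y, P A μ := by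
      intro A hA
      refine ih (fun j => X j.succ) (fun j => mX _) (fun j => sbX _) (fun j => uX _)
        (fun B => ν (cns A B)) (fun B => hfin _) ?_
      intro i B hB
      obtain ⟨m, hm⟩ := hνmeas i.succ (cns A B) (hconsmeas A B hA hB)
      refine ⟨m, fun C hC => ?_⟩
      rw [hm C hC]
      congr 1
      exact (Fin.cons_update (α := fun i => Set (X i)) A B i C).symm
    classical
    set μf : Set (X 0) → Measure Y := fun A =>
      if hA : MeasurableSet A then (H A hA).exists.choose else 0 with hμf
    have hμfP : ∀ A : Set (X 0), MeasurableSet A → P A (μf A) := by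
      intro A hA
      rw [hμf]
      simp only [dif_pos hA]
      exact (H A hA).exists.choose_spec
    have hμfU : ∀ (A : Set (X 0)) (hA : MeasurableSet A) (μ' : Measure Y),
        P A μ' → μ' = μf A := by
      intro A hA μ' hμ'
      obtain ⟨μ'', hμ''1, hμ''2⟩ := H A hA
      rw [hμ''2 μ' hμ', hμ''2 (μf A) (hμfP A hA)]
    -- zero and additivity
    have hzero : μf ∅ = 0 := by
      refine (hμfU ∅ MeasurableSet.empty 0 ?_).symm
      intro B hB
      obtain ⟨m, hm⟩ := hνmeas 0 (cns univ B)
        (hconsmeas univ B MeasurableSet.univ hB)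
      have h1 : ν (cns ∅ B) = m ∅ := by
        rw [hm ∅ MeasurableSet.empty]
        congr 1
        exact (Fin.update_cons_zero (α := fun i => Set (X i)) univ B ∅).symm
      rw [Measure.coe_zero, Pi.zero_apply, h1, measure_empty]
    have hsum : ∀ (s : ℕ → Set (X 0)), (∀ k, MeasurableSet (s k)) →
        Pairwise (Function.onFun Disjoint s) →
        μf (⋃ k, s k) = Measure.sum (fun k => μf (s k)) := by
      intro s hs hd
      refine (hμfU _ (MeasurableSet.iUnion hs) _ ?_).symm
      intro B hB
      obtain ⟨m, hm⟩ := hνmeas 0 (cns univ B)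
        (hconsmeas univ B MeasurableSet.univ hB)
      have hcons : ∀ C : Set (X 0), MeasurableSet C → ν (cns C B) = m C := by
        intro C hC
        rw [hm C hC]
        congr 1
        exact (Fin.update_cons_zero (α := fun i => Set (X i)) univ B C).symm
      rw [Measure.sum_apply _ (MeasurableSet.univ_pi hB), hcons _ (MeasurableSet.iUnion hs),
        measure_iUnion hd hs]
      congr 1
      funext k
      rw [hμfP (s k) (hs k) B hB, hcons _ (hs k)]
    -- the bimeasure
    haveI : ∀ j : Fin n, Nonempty (X j.succ) := fun j => by
      have := uX j.succ
      infer_instance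
    -- instances on Y
    haveI hYsb : StandardBorelSpace Y := by infer_instance
    have hn0 : Uncountable Y ∨ n = 0 := by
      rcases Nat.eq_zero_or_pos n with h | h
      · exact Or.inr h
      · refine Or.inl ?_
        have := uX (⟨0, h⟩ : Fin n).succ
        exact (Function.update_injective
          (fun j : Fin n => Classical.arbitrary (X j.succ)) ⟨0, h⟩).uncountable
    have main : ∃ μ : Measure (∀ i, X i),
        ∀ B : ∀ i, Set (X i), (∀ i, MeasurableSet (B i)) → μ (univ.pi B) = ν B := by
      rcases hn0 with hYu | rfl
      · haveI := hYu
        set β : Set (X 0) → Set Y → ℝ≥0∞ := fun A S => μf A S with hβ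
        have h1 : ∀ A, MeasurableSet A →
            ∃ m : Measure Y, ∀ S, MeasurableSet S → m S = β A S :=
          fun A hA => ⟨μf A, fun S _ => rfl⟩
        have h2 : ∀ S, MeasurableSet S →
            ∃ m : Measure (X 0), ∀ A, MeasurableSet A → m A = β A S := by
          intro S hS
          refine ⟨Measure.ofMeasurable (fun A _ => μf A S)
            (by show (μf ∅) S = 0; rw [hzero]; simp) ?_,
            fun A hA => Measure.ofMeasurable_apply A hA⟩
          intro s hs hd
          show (μf (⋃ k, s k)) S = ∑' k, (μf (s k)) S
          rw [hsum s hs hd, Measure.sum_apply _ hS]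
        have hfinβ : β univ univ ≠ ⊤ := by
          have huY : (univ : Set Y) = univ.pi (fun j : Fin n => univ) := (pi_univ _).symm
          show μf univ univ ≠ ⊤
          rw [huY, hμfP univ MeasurableSet.univ _ (fun j => MeasurableSet.univ)]
          exact hfin _
        obtain ⟨μ₂, hμ₂⟩ := exists_measure_prod β hfinβ h1 h2
        have hmcons : Measurable (fun p : X 0 × Y => (Fin.cons p.1 p.2 : ∀ i, X i)) := by
          refine measurable_pi_iff.2 fun i => ?_
          refine Fin.cases ?_ ?_ i
          · show Measurable fun p : X 0 × Y => (Fin.cons p.1 p.2 : ∀ i, X i) 0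
            simp only [Fin.cons_zero]
            exact measurable_fst
          · intro j
            show Measurable fun p : X 0 × Y => (Fin.cons p.1 p.2 : ∀ i, X i) j.succ
            simp only [Fin.cons_succ]
            exact (measurable_pi_apply j).comp measurable_snd
        refine ⟨μ₂.map (fun p : X 0 × Y => (Fin.cons p.1 p.2 : ∀ i, X i)), ?_⟩
        intro B hB
        rw [Measure.map_apply hmcons (MeasurableSet.univ_pi hB)]
        have hpre : (fun p : X 0 × Y => (Fin.cons p.1 p.2 : ∀ i, X i)) ⁻¹' (univ.pi B)
            = (B 0) ×ˢ (univ.pi fun j : Fin n => B j.succ) := by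
          ext ⟨a, b⟩
          simp only [mem_preimage, Set.mem_pi, mem_univ, forall_true_left, mem_prod]
          constructor
          · intro h
            refine ⟨?_, fun j => ?_⟩
            · have := h 0
              rwa [Fin.cons_zero] at this
            · have := h j.succ
              rwa [Fin.cons_succ] at this
          · rintro ⟨h0, hs⟩ i
            refine Fin.cases ?_ ?_ i
            · rwa [Fin.cons_zero]
            · intro j
              rw [Fin.cons_succ]
              exact hs j
        rw [hpre, hμ₂ (B 0) _ (hB 0) (MeasurableSet.univ_pi fun j => hB j.succ)]
        show μf (B 0) _ = ν B
        rw [hμfP (B 0) (hB 0) (fun j => B j.succ) (fun j => hB j.succ)]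
        show ν (Fin.cons (B 0) (Fin.tail B)) = ν B
        rw [Fin.cons_self_tail]
      · -- n = 0 : a single coordinate
        obtain ⟨m, hm⟩ := hνmeas 0 (fun i => univ) (fun i => MeasurableSet.univ)
        have hmeas : Measurable
            (fun x : X 0 => (Fin.cons x (fun j => j.elim0) : ∀ i, X i)) := by
          refine measurable_pi_iff.2 fun i => ?_
          refine Fin.cases ?_ (fun j => j.elim0) i
          show Measurable fun x : X 0 =>
            (Fin.cons x (fun j => j.elim0) : ∀ i, X i) 0
          simp only [Fin.cons_zero]
          exact measurable_id
        refine ⟨m.map (fun x : X 0 => (Fin.cons x (fun j => j.elim0) : ∀ i, X i)), ?_⟩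
        intro B hB
        rw [Measure.map_apply hmeas (MeasurableSet.univ_pi hB)]
        have hpre : (fun x : X 0 => (Fin.cons x (fun j => j.elim0) : ∀ i, X i)) ⁻¹'
            (univ.pi B) = B 0 := by
          ext x
          simp only [mem_preimage, Set.mem_pi, mem_univ, forall_true_left]
          constructor
          · intro h
            have := h 0
            rwa [Fin.cons_zero] at this
          · intro hx i
            refine Fin.cases ?_ (fun j => j.elim0) i
            rwa [Fin.cons_zero]
        rw [hpre, hm (B 0) (hB 0)]
        congr 1
        funext i
        refine Fin.cases ?_ (fun j => j.elim0) i
        rw [Function.update_self]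
    obtain ⟨μ, hμ⟩ := main
    haveI : IsFiniteMeasure μ := by
      constructor
      have h := hμ (fun i => univ) (fun i => MeasurableSet.univ)
      rw [pi_univ] at h
      rw [h]
      exact (hfin _).lt_top
    exact ⟨μ, hμ, fun μ' hμ' =>
      pi_measure_unique μ' μ (fun B hB => by rw [hμ' B hB, hμ B hB])⟩




open MeasureTheory

/-- Let `X₁, …, Xₙ` be uncountable complete separable metric spaces and
let `ν` be a set function on `B(X₁) × ⋯ × B(Xₙ)` with values in `[0,∞)` which is a
countably additive measure in each coordinate separately.  Then there is a unique measure
`μ` on the product σ-algebra with `μ(B₁ × ⋯ × Bₙ) = ν(B₁,…,Bₙ)` for all Borel `Bᵢ`. -/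
theorem exists_unique_product_measure_of_separately_measure (n : ℕ)
    (X : Fin n → Type*) [∀ i, MetricSpace (X i)] [∀ i, CompleteSpace (X i)]
    [∀ i, TopologicalSpace.SeparableSpace (X i)] [∀ i, Uncountable (X i)]
    [∀ i, MeasurableSpace (X i)] [∀ i, BorelSpace (X i)]
    (ν : (∀ i, Set (X i)) → ENNReal) (hfin : ∀ B, ν B ≠ ⊤)
    (hνmeas : ∀ (i : Fin n) (B : ∀ j, Set (X j)), (∀ j, MeasurableSet (B j)) →
      ∃ m : Measure (X i), ∀ C : Set (X i), MeasurableSet C →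
        m C = ν (Function.update B i C)) :
    ∃! μ : Measure (∀ i, X i),
      ∀ B : ∀ i, Set (X i), (∀ i, MeasurableSet (B i)) → μ (Set.univ.pi B) = ν B := by
  have hsb : ∀ i, StandardBorelSpace (X i) := fun i => by
    haveI : SecondCountableTopology (X i) :=
      UniformSpace.secondCountable_of_separable (X i)
    infer_instance
  exact aux_product_measure n X (fun i => inferInstance) hsb (fun i => inferInstance)
    ν hfin hνmeas
end
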